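/- Let F : Bool → ℝ≥0. Then (F(true)/2) + Σ_{m∈ℕ} ((1/2)^{m+1}/(m+1)! − (1/2)^{m+2}/(m+2)!) · F(m mod 2 = 1) = e^{−1/2}·F(true) + (1 − e^{−1/2})·F(false). -/
import Mathlib

lemma tsum_exp_real (x : ℝ) : ∑' k : ℕ, x ^ k / (Nat.factorial k : ℝ) = Real.exp x := by
  rw [Real.exp_eq_exp_ℝ, NormedSpace.exp_eq_tsum_div]

theorem bernoulli_half_exp_expectation
    (F : Bool → ℝ) (hnonneg : ∀ b, 0 ≤ F b) :
    F true / 2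
      + (∑' m : ℕ,
          ((1/2 : ℝ) ^ (m + 1) / (Nat.factorial (m + 1) : ℝ)
            - (1/2 : ℝ) ^ (m + 2) / (Nat.factorial (m + 2) : ℝ))
          * F (decide (m % 2 = 1)))
      = Real.exp (-(1/2)) * F true + (1 - Real.exp (-(1/2))) * F false := by
  set x : ℝ := 1/2 with hxdef
  set b : ℕ → ℝ := fun k => x ^ k / (Nat.factorial k : ℝ) with hb
  set c : ℕ → ℝ := fun k => (-x) ^ k / (Nat.factorial k : ℝ) with hc
  have hbs : Summable b := Real.summable_pow_div_factorial x
  have hcs : Summable c := Real.summable_pow_div_factorial (-x)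
  have hbs1 : Summable (fun m => b (m + 1)) := (summable_nat_add_iff 1).2 hbs
  have hbs2 : Summable (fun m => b (m + 2)) := (summable_nat_add_iff 2).2 hbs
  have hcs1 : Summable (fun m => c (m + 1)) := (summable_nat_add_iff 1).2 hcs
  have hcs2 : Summable (fun m => c (m + 2)) := (summable_nat_add_iff 2).2 hcs
  -- key pointwise identity
  have hF : ∀ m : ℕ, (b (m+1) - b (m+2)) * F (decide (m % 2 = 1))
      = ((F true + F false)/2) * (b (m+1) - b (m+2))
        + ((F false - F true)/2) * (-(c (m+1)) - c (m+2)) := by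
    intro m
    have hck : ∀ k : ℕ, c k = (-1 : ℝ) ^ k * b k := by
      intro k
      show (-x) ^ k / (Nat.factorial k : ℝ) = (-1:ℝ)^k * (x ^ k / (Nat.factorial k : ℝ))
      rw [neg_pow]; ring
    rcases Nat.even_or_odd m with hm | hm
    · obtain ⟨j, rfl⟩ := hm
      have h1 : (j + j) % 2 = 0 := by omega
      rw [hck, hck]
      have e1 : ((-1:ℝ)) ^ (j + j + 1) = -1 := by
        rw [pow_succ, ← two_mul]; simp
      have e2 : ((-1:ℝ)) ^ (j + j + 2) = 1 := by
        rw [pow_add, ← two_mul]; simp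
      simp only [h1, e1, e2]
      norm_num; ring
    · obtain ⟨j, rfl⟩ := hm
      have h1 : (2*j + 1) % 2 = 1 := by omega
      rw [hck, hck]
      have e1 : ((-1:ℝ)) ^ (2*j + 1 + 1) = 1 := by
        rw [show 2*j+1+1 = 2*(j+1) by ring]; simp [pow_mul]
      have e2 : ((-1:ℝ)) ^ (2*j + 1 + 2) = -1 := by
        rw [show 2*j+1+2 = 2*(j+1)+1 by ring, pow_succ, pow_mul]; simp
      simp only [h1, e1, e2]
      norm_num; ring
  have hsum1 : Summable (fun m => b (m+1) - b (m+2)) := hbs1.sub hbs2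
  have hsum2 : Summable (fun m => -(c (m+1)) - c (m+2)) := hcs1.neg.sub hcs2
  have hT : (∑' m : ℕ, (b (m+1) - b (m+2)) * F (decide (m % 2 = 1)))
      = ((F true + F false)/2) * (∑' m, (b (m+1) - b (m+2)))
        + ((F false - F true)/2) * (∑' m, (-(c (m+1)) - c (m+2))) := by
    rw [← tsum_mul_left, ← tsum_mul_left, ← Summable.tsum_add (hsum1.mul_left _) (hsum2.mul_left _)]
    exact tsum_congr fun m => hF m
  have hb0 : b 0 = 1 := by simp [hb]
  have hb1 : b 1 = x := by simp [hb]
  have hc0 : c 0 = 1 := by simp [hc]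
  have hc1 : c 1 = -x := by simp [hc]
  have htb : ∑' k, b k = Real.exp x := tsum_exp_real x
  have htc : ∑' k, c k = Real.exp (-x) := tsum_exp_real (-x)
  have htb1 : ∑' m, b (m+1) = Real.exp x - 1 := by
    have := Summable.tsum_eq_zero_add hbs
    rw [htb] at this; rw [hb0] at this; linarith
  have htb2 : ∑' m, b (m+2) = Real.exp x - 1 - x := by
    have := Summable.tsum_eq_zero_add hbs1
    rw [htb1] at this
    simp only [zero_add] at this
    rw [hb1] at this; linarith [this]
  have htc1 : ∑' m, c (m+1) = Real.exp (-x) - 1 := by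
    have := Summable.tsum_eq_zero_add hcs
    rw [htc] at this; rw [hc0] at this; linarith
  have htc2 : ∑' m, c (m+2) = Real.exp (-x) - 1 + x := by
    have := Summable.tsum_eq_zero_add hcs1
    rw [htc1] at this
    simp only [zero_add] at this
    rw [hc1] at this; linarith [this]
  have hS : ∑' m, (b (m+1) - b (m+2)) = x := by
    rw [Summable.tsum_sub hbs1 hbs2, htb1, htb2]; ring
  have hA : ∑' m, (-(c (m+1)) - c (m+2)) = 2 - 2 * Real.exp (-x) - x := by
    rw [Summable.tsum_sub hcs1.neg hcs2, tsum_neg, htc1, htc2]; ring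
  have hmain : (∑' m : ℕ,
          ((1/2 : ℝ) ^ (m + 1) / (Nat.factorial (m + 1) : ℝ)
            - (1/2 : ℝ) ^ (m + 2) / (Nat.factorial (m + 2) : ℝ))
          * F (decide (m % 2 = 1)))
      = ((F true + F false)/2) * x + ((F false - F true)/2) * (2 - 2 * Real.exp (-x) - x) := by
    rw [show (fun m : ℕ => ((1/2 : ℝ) ^ (m + 1) / (Nat.factorial (m + 1) : ℝ)
            - (1/2 : ℝ) ^ (m + 2) / (Nat.factorial (m + 2) : ℝ))
          * F (decide (m % 2 = 1)))
        = fun m => (b (m+1) - b (m+2)) * F (decide (m % 2 = 1)) from rfl]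
    rw [hT, hS, hA]
  rw [hmain, hxdef]
  ring
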